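/- Let d be a positive definite density matrix (tr d = 1) and x a positive semidefinite matrix on the same finite-dimensional space. Then lim_{p → ∞} ‖d^{1/(2p)} x d^{1/(2p)}‖_p = ‖x‖_∞, where ‖·‖_p is the Schatten p-norm and ‖x‖_∞ the operator norm. -/

import Mathlib

open scoped ComplexOrder

variable {n : ℕ}

/-- The Schatten `p`-norm of a complex matrix via singular values. -/
noncomputable def schattenNorm (x : Matrix (Fin n) (Fin n) ℂ) (p : ℝ) : ℝ :=
  (∑ i, ((Matrix.posSemidef_conjTranspose_mul_self x).1.eigenvalues i) ^ (p / 2)) ^ (1 / p)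

/-- The operator norm of a complex matrix: the largest singular value. -/
noncomputable def operNorm (x : Matrix (Fin n) (Fin n) ℂ) : ℝ :=
  ⨆ i, Real.sqrt ((Matrix.posSemidef_conjTranspose_mul_self x).1.eigenvalues i)

/-- The real power `d^r` of a Hermitian matrix, via the functional calculus. -/
noncomputable def hermPow {d : Matrix (Fin n) (Fin n) ℂ} (hd : d.IsHermitian) (r : ℝ) :
    Matrix (Fin n) (Fin n) ℂ :=
  hd.cfc (fun t => t ^ r)

section Aux

open scoped Matrix.Norms.L2Operator
open Matrix Filter

noncomputable local instance matrixCStarAlgebra : CStarAlgebra (Matrix (Fin n) (Fin n) ℂ) :=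
  { Matrix.instL2OpNormedRing (n := Fin n) (𝕜 := ℂ),
    Matrix.instL2OpNormedAlgebra (n := Fin n) (𝕜 := ℂ),
    (inferInstance : StarRing (Matrix (Fin n) (Fin n) ℂ)),
    Matrix.instCStarRing (n := Fin n) (𝕜 := ℂ),
    (inferInstance : CompleteSpace (Matrix (Fin n) (Fin n) ℂ)),
    (inferInstance : StarModule ℂ (Matrix (Fin n) (Fin n) ℂ)) with }

local instance [Nonempty (Fin n)] : Nontrivial (Matrix (Fin n) (Fin n) ℂ) := by
  inhabit Fin n
  refine ⟨0, 1, fun h => ?_⟩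
  simpa using congrFun (congrFun h default) default

/-- For a Hermitian matrix, the norm is bounded by a bound on the real spectrum. -/
lemma norm_le_of_spectrum_le [Nonempty (Fin n)] {M : Matrix (Fin n) (Fin n) ℂ}
    (hM : M.IsHermitian) {b : ℝ} (hb : ∀ k ∈ spectrum ℝ M, |k| ≤ b) : ‖M‖ ≤ b := by
  rcases CStarAlgebra.norm_or_neg_norm_mem_spectrum (a := M) hM.isSelfAdjoint with h | h
  · exact (le_abs_self _).trans (hb _ h)
  · have := hb _ h
    rw [abs_neg, abs_of_nonneg (norm_nonneg _)] at this
    exact this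

/-- The operator norm of a positive semidefinite matrix is the supremum of its eigenvalues. -/
lemma norm_psd_eq_iSup [Nonempty (Fin n)] {M : Matrix (Fin n) (Fin n) ℂ} (hM : M.PosSemidef) :
    ‖M‖ = ⨆ i, hM.1.eigenvalues i := by
  have hbdd : BddAbove (Set.range hM.1.eigenvalues) := (Set.finite_range _).bddAbove
  refine le_antisymm ?_ (ciSup_le fun i => ?_)
  · refine norm_le_of_spectrum_le hM.1 fun k hk => ?_
    rw [hM.1.spectrum_real_eq_range_eigenvalues] at hk
    obtain ⟨i, rfl⟩ := hk
    rw [abs_of_nonneg (hM.eigenvalues_nonneg i)]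
    exact le_ciSup hbdd i
  · calc hM.1.eigenvalues i ≤ |hM.1.eigenvalues i| := le_abs_self _
      _ = ‖hM.1.eigenvalues i‖ := (Real.norm_eq_abs _).symm
      _ ≤ ‖M‖ := spectrum.norm_le_norm_of_mem (hM.1.eigenvalues_mem_spectrum_real i)

/-- The Schatten norm is squeezed between the operator norm and `n^(1/p)` times it. -/
lemma schattenNorm_bounds [Nonempty (Fin n)] (y : Matrix (Fin n) (Fin n) ℂ) {p : ℝ}
    (hp : 0 < p) : ‖y‖ ≤ schattenNorm y p ∧ schattenNorm y p ≤ (n : ℝ) ^ (1/p) * ‖y‖ := by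
  set h := Matrix.posSemidef_conjTranspose_mul_self y with hh
  set μ := h.1.eigenvalues with hμ
  have hnn : ∀ i, 0 ≤ μ i := fun i => h.eigenvalues_nonneg i
  have hbdd : BddAbove (Set.range μ) := (Set.finite_range _).bddAbove
  set M := ⨆ i, μ i with hM
  have hMy : M = ‖y‖ * ‖y‖ := by
    rw [hM, ← norm_psd_eq_iSup h, Matrix.l2_opNorm_conjTranspose_mul_self]
  have hMnn : 0 ≤ M := by rw [hMy]; positivity
  have hM12 : M ^ ((1:ℝ)/2) = ‖y‖ := by
    rw [← Real.sqrt_eq_rpow, hMy, Real.sqrt_mul_self (norm_nonneg y)]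
  have hexp : (p/2) * (1/p) = 1/2 := by field_simp
  obtain ⟨i0, hi0⟩ := Finite.exists_max μ
  have hMi0 : M = μ i0 := le_antisymm (ciSup_le hi0) (le_ciSup hbdd i0)
  have hsum_nonneg : ∀ i ∈ Finset.univ, 0 ≤ μ i ^ (p/2) :=
    fun i _ => Real.rpow_nonneg (hnn i) _
  constructor
  · have h1 : M ^ (p/2) ≤ ∑ i, μ i ^ (p/2) := by
      rw [hMi0]
      exact Finset.single_le_sum hsum_nonneg (Finset.mem_univ i0)
    have h2 : (M ^ (p/2)) ^ (1/p) ≤ schattenNorm y p :=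
      Real.rpow_le_rpow (Real.rpow_nonneg hMnn _) h1 (by positivity)
    rwa [← Real.rpow_mul hMnn, hexp, hM12] at h2
  · have h1 : ∑ i, μ i ^ (p/2) ≤ (n : ℝ) * M ^ (p/2) := by
      calc ∑ i, μ i ^ (p/2) ≤ ∑ _i : Fin n, M ^ (p/2) :=
            Finset.sum_le_sum fun i _ =>
              Real.rpow_le_rpow (hnn i) (le_ciSup hbdd i) (by positivity)
        _ = (n : ℝ) * M ^ (p/2) := by
            rw [Finset.sum_const, Finset.card_univ, Fintype.card_fin, nsmul_eq_mul]
    have h2 : schattenNorm y p ≤ ((n : ℝ) * M ^ (p/2)) ^ (1/p) :=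
      Real.rpow_le_rpow (Finset.sum_nonneg hsum_nonneg) h1 (by positivity)
    rwa [Real.mul_rpow (by positivity) (Real.rpow_nonneg hMnn _),
      ← Real.rpow_mul hMnn, hexp, hM12] at h2

variable {d : Matrix (Fin n) (Fin n) ℂ}

lemma hermPow_def (hd : d.IsHermitian) (r : ℝ) :
    hermPow hd r = (hd.eigenvectorUnitary : Matrix (Fin n) (Fin n) ℂ) *
      Matrix.diagonal (fun i => ((hd.eigenvalues i ^ r : ℝ) : ℂ)) *
      star (hd.eigenvectorUnitary : Matrix (Fin n) (Fin n) ℂ) := rfl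

lemma hermPow_mul (hd : d.PosDef) (r s : ℝ) :
    hermPow hd.1 r * hermPow hd.1 s = hermPow hd.1 (r + s) := by
  rw [hermPow_def, hermPow_def, hermPow_def]
  have hU : (hd.1.eigenvectorUnitary : Matrix (Fin n) (Fin n) ℂ) ∈
      unitary (Matrix (Fin n) (Fin n) ℂ) := SetLike.coe_mem _
  have key : star (hd.1.eigenvectorUnitary : Matrix (Fin n) (Fin n) ℂ) *
      (hd.1.eigenvectorUnitary : Matrix (Fin n) (Fin n) ℂ) = 1 :=
    Unitary.star_mul_self_of_mem hU
  calc _ = (hd.1.eigenvectorUnitary : Matrix (Fin n) (Fin n) ℂ) *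
        (Matrix.diagonal (fun i => ((hd.1.eigenvalues i ^ r : ℝ) : ℂ)) *
         (star (hd.1.eigenvectorUnitary : Matrix (Fin n) (Fin n) ℂ) *
          (hd.1.eigenvectorUnitary : Matrix (Fin n) (Fin n) ℂ)) *
         Matrix.diagonal (fun i => ((hd.1.eigenvalues i ^ s : ℝ) : ℂ))) *
        star (hd.1.eigenvectorUnitary : Matrix (Fin n) (Fin n) ℂ) := by
        simp only [mul_assoc]
    _ = _ := by
        rw [key, mul_one, Matrix.diagonal_mul_diagonal]
        have : (fun i => ((hd.1.eigenvalues i ^ r : ℝ) : ℂ) * ((hd.1.eigenvalues i ^ s : ℝ) : ℂ))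
            = fun i => ((hd.1.eigenvalues i ^ (r + s) : ℝ) : ℂ) := funext fun i => by
          rw [← Complex.ofReal_mul, ← Real.rpow_add (hd.eigenvalues_pos i)]
        rw [this]

lemma hermPow_zero (hd : d.PosDef) : hermPow hd.1 0 = 1 := by
  rw [hermPow_def]
  have : (fun i => ((hd.1.eigenvalues i ^ (0:ℝ) : ℝ) : ℂ)) = fun _ => 1 := by
    ext i; rw [Real.rpow_zero]; norm_num
  rw [this, Matrix.diagonal_one, mul_one,
    Unitary.mul_star_self_of_mem (SetLike.coe_mem _)]

lemma norm_hermPow_le [Nonempty (Fin n)] (hd : d.PosDef) {r b : ℝ}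
    (h : ∀ i, |hd.1.eigenvalues i ^ r| ≤ b) : ‖hermPow hd.1 r‖ ≤ b := by
  rw [hermPow_def]
  have hU : (hd.1.eigenvectorUnitary : Matrix (Fin n) (Fin n) ℂ) ∈
      unitary (Matrix (Fin n) (Fin n) ℂ) := SetLike.coe_mem _
  have hDnorm : ‖Matrix.diagonal (fun i => ((hd.1.eigenvalues i ^ r : ℝ) : ℂ))‖ ≤ b := by
    refine norm_le_of_spectrum_le ?_ fun k hk => ?_
    · show Matrix.IsHermitian _
      rw [Matrix.IsHermitian, Matrix.diagonal_conjTranspose]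
      congr 1
      ext i
      simp [Pi.star_def]
    · have : (algebraMap ℝ ℂ k) ∈ spectrum ℂ
          (Matrix.diagonal (fun i => ((hd.1.eigenvalues i ^ r : ℝ) : ℂ))) :=
        (spectrum.algebraMap_mem_iff ℂ).mpr hk
      rw [spectrum_diagonal] at this
      obtain ⟨i, hi⟩ := this
      have : k = hd.1.eigenvalues i ^ r := by
        have := hi.symm
        simpa [Complex.ofReal_inj] using this
      rw [this]; exact h i
  calc ‖(hd.1.eigenvectorUnitary : Matrix (Fin n) (Fin n) ℂ) *
        Matrix.diagonal (fun i => ((hd.1.eigenvalues i ^ r : ℝ) : ℂ)) *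
        star (hd.1.eigenvectorUnitary : Matrix (Fin n) (Fin n) ℂ)‖
      ≤ ‖(hd.1.eigenvectorUnitary : Matrix (Fin n) (Fin n) ℂ) *
          Matrix.diagonal (fun i => ((hd.1.eigenvalues i ^ r : ℝ) : ℂ))‖ *
        ‖star (hd.1.eigenvectorUnitary : Matrix (Fin n) (Fin n) ℂ)‖ := norm_mul_le _ _
    _ ≤ ‖(hd.1.eigenvectorUnitary : Matrix (Fin n) (Fin n) ℂ)‖ *
        ‖Matrix.diagonal (fun i => ((hd.1.eigenvalues i ^ r : ℝ) : ℂ))‖ *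
        ‖star (hd.1.eigenvectorUnitary : Matrix (Fin n) (Fin n) ℂ)‖ := by
        gcongr; exact norm_mul_le _ _
    _ ≤ b := by
        rw [CStarRing.norm_coe_unitary ⟨_, hU⟩,
          CStarRing.norm_coe_unitary ⟨_, Unitary.star_mem hU⟩]
        simpa using hDnorm

lemma tendsto_rpow_one_div {a : ℝ} (ha : 0 < a) :
    Filter.Tendsto (fun p : ℝ => a ^ (1/p)) atTop (nhds 1) := by
  have h1 : Filter.Tendsto (fun p : ℝ => 1/p) atTop (nhds 0) := by
    simpa [one_div] using tendsto_inv_atTop_zero (𝕜 := ℝ)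
  have h2 : ContinuousAt (fun y : ℝ => a ^ y) 0 := Real.continuousAt_const_rpow ha.ne'
  have := h2.tendsto.comp h1
  rwa [Real.rpow_zero] at this

set_option maxHeartbeats 2000000 in
/-- For a positive definite density matrix `d` (trace one) and a positive semidefinite
matrix `x`, the weighted norms `‖d^{1/(2p)} x d^{1/(2p)}‖_p` converge to `‖x‖_∞` as
`p → ∞`. -/
theorem weighted_schatten_tendsto (d x : Matrix (Fin n) (Fin n) ℂ)
    (hd : d.PosDef) (htr : d.trace = 1) (hx : x.PosSemidef) :
    Filter.Tendsto
      (fun p : ℝ => schattenNorm (hermPow hd.1 (1 / (2 * p)) * x * hermPow hd.1 (1 / (2 * p))) p)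
      Filter.atTop (nhds (operNorm x)) := by
  rcases Nat.eq_zero_or_pos n with hn | hn
  · subst hn
    have h1 : operNorm x = 0 := Real.iSup_of_isEmpty _
    rw [h1]
    refine Filter.Tendsto.congr' ?_ (tendsto_const_nhds (α := ℝ) (x := 0))
    filter_upwards [eventually_gt_atTop (0:ℝ)] with p hp
    have : (∑ i : Fin 0, ((Matrix.posSemidef_conjTranspose_mul_self
        (hermPow hd.1 (1 / (2 * p)) * x * hermPow hd.1 (1 / (2 * p)))).1.eigenvalues i) ^ (p / 2))
        = 0 := by simp
    rw [schattenNorm, this, Real.zero_rpow (one_div_ne_zero hp.ne')]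
  · haveI : Nonempty (Fin n) := ⟨⟨0, hn⟩⟩
    have hoper : operNorm x = ‖x‖ := by
      have h := Matrix.posSemidef_conjTranspose_mul_self x
      have hbdd : BddAbove (Set.range h.1.eigenvalues) := (Set.finite_range _).bddAbove
      rw [operNorm, ← Monotone.map_ciSup_of_continuousAt
        (Real.continuous_sqrt.continuousAt) (fun a b hab => Real.sqrt_le_sqrt hab) hbdd,
        ← norm_psd_eq_iSup h, Matrix.l2_opNorm_conjTranspose_mul_self,
        Real.sqrt_mul_self (norm_nonneg x)]
    rw [hoper]
    set lam := hd.1.eigenvalues with hlam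
    have hpos : ∀ i, 0 < lam i := fun i => hd.eigenvalues_pos i
    obtain ⟨im, him⟩ := Finite.exists_min lam
    obtain ⟨iM, hiM⟩ := Finite.exists_max lam
    set k := min (lam im) 1 with hk
    set K := max (lam iM) 1 with hK
    have hk0 : 0 < k := lt_min (hpos im) one_pos
    have hK0 : 0 < K := lt_of_lt_of_le one_pos (le_max_right _ _)
    have hklam : ∀ i, k ≤ lam i := fun i => (min_le_left _ _).trans (him i)
    have hlamK : ∀ i, lam i ≤ K := fun i => (hiM i).trans (le_max_left _ _)
    have hn0 : (0:ℝ) < n := by exact_mod_cast hn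
    have hlow : Filter.Tendsto (fun p : ℝ => k ^ (1/p) * ‖x‖) atTop (nhds ‖x‖) := by
      have := (tendsto_rpow_one_div hk0).mul_const ‖x‖
      rwa [one_mul] at this
    have hhigh : Filter.Tendsto (fun p : ℝ => (n:ℝ) ^ (1/p) * (K ^ (1/p) * ‖x‖)) atTop
        (nhds ‖x‖) := by
      have := (tendsto_rpow_one_div hn0).mul ((tendsto_rpow_one_div hK0).mul_const ‖x‖)
      rwa [one_mul, one_mul] at this
    refine tendsto_of_tendsto_of_tendsto_of_le_of_le' hlow hhigh ?_ ?_
    all_goals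
      filter_upwards [eventually_ge_atTop (1:ℝ)] with p hp
    all_goals
      have hp0 : 0 < p := lt_of_lt_of_le one_pos hp
      set r := 1 / (2 * p) with hr
      have hr0 : 0 < r := by positivity
      have hp' : p ≠ 0 := hp0.ne'
      have hrr : r + r = 1/p := by
        rw [hr, ← add_div, one_add_one_eq_two, div_eq_div_iff (by positivity) hp']
        ring
      set B := hermPow hd.1 r with hB
      set C := hermPow hd.1 (-r) with hC
      set A := B * x * B with hA
      have hBC : B * C = 1 := by rw [hB, hC, hermPow_mul hd, add_neg_cancel, hermPow_zero hd]
      have hCB : C * B = 1 := by rw [hB, hC, hermPow_mul hd, neg_add_cancel, hermPow_zero hd]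
      have hnormB : ‖B‖ ≤ K ^ r := by
        refine norm_hermPow_le hd fun i => ?_
        rw [abs_of_nonneg (Real.rpow_nonneg (hpos i).le _)]
        exact Real.rpow_le_rpow (hpos i).le (hlamK i) hr0.le
      have hnormC : ‖C‖ ≤ k ^ (-r) := by
        refine norm_hermPow_le hd fun i => ?_
        rw [abs_of_nonneg (Real.rpow_nonneg (hpos i).le _)]
        exact Real.rpow_le_rpow_of_nonpos hk0 (hklam i) (neg_nonpos.mpr hr0.le)
    · -- lower bound : k ^ (1/p) * ‖x‖ ≤ schattenNorm A p
      have hxCAC : x = C * A * C := by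
        rw [hA]
        calc x = 1 * x * 1 := by rw [one_mul, mul_one]
          _ = (C * B) * x * (B * C) := by rw [hBC, hCB]
          _ = C * (B * x * B) * C := by simp only [mul_assoc]
      have hxA : ‖x‖ ≤ k ^ (-r) * ‖A‖ * k ^ (-r) := by
        calc ‖x‖ = ‖C * A * C‖ := by rw [← hxCAC]
          _ ≤ ‖C * A‖ * ‖C‖ := norm_mul_le _ _
          _ ≤ ‖C‖ * ‖A‖ * ‖C‖ := by gcongr; exact norm_mul_le _ _
          _ ≤ k ^ (-r) * ‖A‖ * k ^ (-r) := by
              gcongr <;> first | exact hnormC | exact norm_nonneg _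
      have key : k ^ (1/p) * ‖x‖ ≤ ‖A‖ := by
        have h1 := mul_le_mul_of_nonneg_left hxA (Real.rpow_nonneg hk0.le (1/p))
        have h2 : k ^ (1/p) * (k ^ (-r) * ‖A‖ * k ^ (-r)) = ‖A‖ := by
          rw [show k ^ (-r) * ‖A‖ * k ^ (-r) = (k ^ (-r) * k ^ (-r)) * ‖A‖ by ring,
            ← Real.rpow_add hk0, ← mul_assoc, ← Real.rpow_add hk0,
            show 1/p + (-r + -r) = 0 by rw [← hrr]; ring, Real.rpow_zero, one_mul]
        calc k ^ (1/p) * ‖x‖ ≤ k ^ (1/p) * (k ^ (-r) * ‖A‖ * k ^ (-r)) := h1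
          _ = ‖A‖ := h2
      exact key.trans (schattenNorm_bounds A hp0).1
    · -- upper bound : schattenNorm A p ≤ n^(1/p) * (K^(1/p) * ‖x‖)
      have hAx : ‖A‖ ≤ K ^ (1/p) * ‖x‖ := by
        calc ‖A‖ ≤ ‖B * x‖ * ‖B‖ := norm_mul_le _ _
          _ ≤ ‖B‖ * ‖x‖ * ‖B‖ := by gcongr; exact norm_mul_le _ _
          _ ≤ K ^ r * ‖x‖ * K ^ r := by
              gcongr <;> first | exact hnormB | exact norm_nonneg _
          _ = K ^ (1/p) * ‖x‖ := by
              rw [show K ^ r * ‖x‖ * K ^ r = (K ^ r * K ^ r) * ‖x‖ by ring,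
                ← Real.rpow_add hK0, hrr]
      calc schattenNorm A p ≤ (n:ℝ) ^ (1/p) * ‖A‖ := (schattenNorm_bounds A hp0).2
        _ ≤ (n:ℝ) ^ (1/p) * (K ^ (1/p) * ‖x‖) := by
            gcongr

end Aux
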